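/- Let φ: (Mᵐ,g) → (N,h), m > 2, be a smooth map whose biharmonic stress-energy tensor S₂ vanishes. If at every point p ∈ M the rank of dφ_p is at most m−1, then φ is harmonic. -/
import Mathlib


open scoped RealInnerProductSpace
noncomputable section

/-- A fixed orthonormal frame of the (model) tangent space of the `m`-dimensional
Riemannian manifold `M`. -/
def onb (m : ℕ) : OrthonormalBasis (Fin m) ℝ (EuclideanSpace ℝ (Fin m)) :=
  EuclideanSpace.basisFun (Fin m) ℝ

/-- The biharmonic stress-energy tensor
`S₂(X,Y) = ½|τ(φ)|² ⟨X,Y⟩ + ⟨dφ,∇τ(φ)⟩ ⟨X,Y⟩ − ⟨dφ(X),∇_Y τ(φ)⟩ − ⟨dφ(Y),∇_X τ(φ)⟩`,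
expressed pointwise in terms of the differential `dphi` of `φ`, the tension field `tau`
and its covariant derivative `Dtau` (the trace `⟨dφ,∇τ(φ)⟩` being computed in an
orthonormal frame). -/
def S2 {m : ℕ} {F : Type*} [NormedAddCommGroup F] [InnerProductSpace ℝ F]
    (dphi : EuclideanSpace ℝ (Fin m) →ₗ[ℝ] F) (tau : F)
    (Dtau : EuclideanSpace ℝ (Fin m) →ₗ[ℝ] F)
    (X Y : EuclideanSpace ℝ (Fin m)) : ℝ :=
  (1 / 2 : ℝ) * ‖tau‖ ^ 2 * ⟪X, Y⟫
    + (∑ i, ⟪dphi (onb m i), Dtau (onb m i)⟫) * ⟪X, Y⟫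
    - ⟪dphi X, Dtau Y⟫ - ⟪dphi Y, Dtau X⟫

/-- A map `φ : (Mᵐ,g) → (N,h)`, `m > 2`, with `S₂ = 0` and
`rank φ ≤ m − 1` at every point, is harmonic. -/
theorem rank_le_S2_zero_harmonic
    (m : ℕ) (hm : 2 < m)
    (M : Type*) (F : Type*) [NormedAddCommGroup F] [InnerProductSpace ℝ F]
    (dphi : M → EuclideanSpace ℝ (Fin m) →ₗ[ℝ] F)
    (tau : M → F)
    (Dtau : M → EuclideanSpace ℝ (Fin m) →ₗ[ℝ] F)
    (hrank : ∀ p, LinearMap.rank (dphi p) ≤ ((m - 1 : ℕ) : Cardinal))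
    (hS2 : ∀ p X Y, S2 (dphi p) (tau p) (Dtau p) X Y = 0) :
    ∀ p, tau p = 0 := by
  intro p
  -- the kernel of `dphi p` is nontrivial
  have hker : ∃ X : EuclideanSpace ℝ (Fin m), X ≠ 0 ∧ dphi p X = 0 := by
    have hinj : ¬ Function.Injective (dphi p) := by
      intro hinj
      have hfin : Module.finrank ℝ (LinearMap.range (dphi p)) = m := by
        rw [LinearMap.finrank_range_of_inj hinj]
        simp
      have hcast : (Module.finrank ℝ (LinearMap.range (dphi p)) : Cardinal)
          = LinearMap.rank (dphi p) := Module.finrank_eq_rank ℝ _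
      have h := hrank p
      rw [← hcast, hfin] at h
      have : m ≤ m - 1 := by exact_mod_cast h
      omega
    rw [injective_iff_map_eq_zero] at hinj
    push_neg at hinj
    obtain ⟨X, hX0, hXne⟩ := hinj
    exact ⟨X, hXne, hX0⟩
  obtain ⟨X, hXne, hXker⟩ := hker
  set t : ℝ := ‖tau p‖ ^ 2 with ht
  set T : ℝ := ∑ i, ⟪dphi p (onb m i), Dtau p (onb m i)⟫ with hT
  -- plug X = Y = X ∈ ker dφ
  have h1 : (1 / 2 : ℝ) * t + T = 0 := by
    have h := hS2 p X X
    unfold S2 at h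
    rw [hXker] at h
    simp only [inner_zero_left, real_inner_self_eq_norm_sq] at h
    have hX2 : (0 : ℝ) < ‖X‖ ^ 2 := by
      have : (0:ℝ) < ‖X‖ := norm_pos_iff.mpr hXne
      positivity
    have : ((1 / 2 : ℝ) * t + T) * ‖X‖ ^ 2 = 0 := by rw [← hT, ← ht] at h; ring_nf; ring_nf at h; linarith
    rcases mul_eq_zero.mp this with h' | h'
    · exact h'
    · exact absurd h' (ne_of_gt hX2)
  -- take the trace over the orthonormal frame
  have h2 : (m : ℝ) * ((1 / 2 : ℝ) * t + T) - 2 * T = 0 := by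
    have hsum : ∑ i, S2 (dphi p) (tau p) (Dtau p) (onb m i) (onb m i) = 0 := by
      simp [hS2 p]
    have horth : ∀ i, ⟪(onb m i : EuclideanSpace ℝ (Fin m)), (onb m i : EuclideanSpace ℝ (Fin m))⟫ = (1 : ℝ) := by
      intro i
      rw [real_inner_self_eq_norm_sq, (onb m).orthonormal.1 i]
      norm_num
    unfold S2 at hsum
    simp only [horth, mul_one, Finset.sum_sub_distrib, Finset.sum_add_distrib,
      Finset.sum_const, Finset.card_univ, Fintype.card_fin, nsmul_eq_mul] at hsum
    rw [← hT, ← ht] at hsum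
    ring_nf
    ring_nf at hsum
    linarith
  have hT0 : T = 0 := by
    rw [h1, mul_zero] at h2; linarith
  have ht0 : t = 0 := by rw [hT0] at h1; linarith
  have : ‖tau p‖ = 0 := by
    have := ht0
    rw [ht] at this
    nlinarith [norm_nonneg (tau p)]
  simpa using this

end
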